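/- Let x_1, …, x_n be nonnegative real numbers with Σ_{i=1}^n x_i ≤ 1. Then there exist q_1, …, q_n ∈ [0,1] such that for every i ∈ [n], q_i · (1 − Σ_{j<i} x_j·q_j) ≥ √2 − 1. (In fact one may take q_i = f(Σ_{j<i} x_j) where f(t) = 1/√((3+2√2) − (2+2√2)t).) -/
import Mathlib

/-- Given nonnegative reals `x i` summing to at most 1, there exist
`q i ∈ [0,1]` with `q i * (1 - ∑_{j<i} x j * q j) ≥ √2 - 1` for all `i`. -/
theorem stmt_3 (n : ℕ) (x : Fin n → ℝ) (hx : ∀ i, 0 ≤ x i) (hsum : ∑ i, x i ≤ 1) :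
    ∃ q : Fin n → ℝ, (∀ i, q i ∈ Set.Icc (0 : ℝ) 1) ∧
      ∀ i : Fin n,
        Real.sqrt 2 - 1 ≤
          q i * (1 - ∑ j ∈ Finset.univ.filter (fun j => j < i), x j * q j) := by
  set c : ℝ := Real.sqrt 2 - 1 with hc
  set a : ℝ := 3 + 2 * Real.sqrt 2 with ha
  set b : ℝ := 2 + 2 * Real.sqrt 2 with hb
  have hs2 : Real.sqrt 2 ^ 2 = 2 := Real.sq_sqrt (by norm_num)
  have h1 : (1 : ℝ) ≤ Real.sqrt 2 := by
    have := Real.sqrt_le_sqrt (show (1:ℝ) ≤ 2 by norm_num)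
    rwa [Real.sqrt_one] at this
  have hc0 : 0 ≤ c := by rw [hc]; linarith
  have hcb : c * b = 2 := by rw [hc, hb]; nlinarith
  have hsqa : Real.sqrt a = 1 + Real.sqrt 2 := by
    rw [show a = (1 + Real.sqrt 2) ^ 2 by nlinarith]
    exact Real.sqrt_sq (by linarith)
  -- extend x to ℕ
  set X : ℕ → ℝ := fun j => if h : j < n then x ⟨j, h⟩ else 0 with hX
  have hX0 : ∀ j, 0 ≤ X j := by
    intro j; by_cases h : j < n <;> simp [hX, h] <;> exact hx _
  set S : ℕ → ℝ := fun m => ∑ j ∈ Finset.range m, X j with hS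
  have hS0 : ∀ m, 0 ≤ S m := fun m => Finset.sum_nonneg fun j _ => hX0 j
  have hStot : ∀ m, S m ≤ 1 := by
    intro m
    have h1' : S m ≤ ∑ j ∈ Finset.range (m + n), X j :=
      Finset.sum_le_sum_of_subset_of_nonneg
        (Finset.range_subset_range.2 (Nat.le_add_right m n)) (fun j _ _ => hX0 j)
    have h2' : ∑ j ∈ Finset.range (m + n), X j = ∑ j ∈ Finset.range n, X j := by
      refine (Finset.sum_subset (Finset.range_subset_range.2 (Nat.le_add_left n m)) ?_).symm
      intro j _ hj
      simp only [Finset.mem_range, not_lt] at hj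
      simp [hX, Nat.not_lt.2 hj]
    have h3' : ∑ j ∈ Finset.range n, X j = ∑ i, x i := by
      rw [← Fin.sum_univ_eq_sum_range]
      exact Finset.sum_congr rfl fun i _ => by simp [hX, i.isLt]
    calc S m ≤ ∑ j ∈ Finset.range (m + n), X j := h1'
      _ = ∑ i, x i := by rw [h2', h3']
      _ ≤ 1 := hsum
  set u : ℕ → ℝ := fun m => Real.sqrt (a - b * S m) with hu
  have hab : ∀ m, 1 ≤ a - b * S m := by
    intro m
    have := hStot m
    have hb0 : 0 ≤ b := by rw [hb]; linarith
    nlinarith [hS0 m]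
  have hu1 : ∀ m, 1 ≤ u m := by
    intro m
    have := Real.sqrt_le_sqrt (hab m)
    rwa [Real.sqrt_one] at this
  have husq : ∀ m, u m ^ 2 = a - b * S m := fun m =>
    Real.sq_sqrt (by linarith [hab m])
  have hSsucc : ∀ m, S (m + 1) = S m + X m := fun m => Finset.sum_range_succ X m
  have humono : ∀ m, u (m + 1) ≤ u m := by
    intro m
    apply Real.sqrt_le_sqrt
    rw [hSsucc m]
    have hb0 : 0 ≤ b := by rw [hb]; linarith
    nlinarith [hX0 m]
  -- key induction
  have hkey : ∀ m, ∑ j ∈ Finset.range m, X j * (u j)⁻¹ ≤ c * (Real.sqrt a - u m) := by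
    intro m
    induction m with
    | zero => simp [hu, hS]
    | succ m ih =>
      rw [Finset.sum_range_succ]
      have hstep : X m * (u m)⁻¹ ≤ c * (u m - u (m + 1)) := by
        have hp : 1 ≤ u m := hu1 m
        have hv : 1 ≤ u (m + 1) := hu1 (m + 1)
        have hdiff : u m ^ 2 - u (m + 1) ^ 2 = b * X m := by
          rw [husq, husq, hSsucc]; ring
        have hp0 : 0 < u m := by linarith
        rw [← div_eq_mul_inv, div_le_iff₀ hp0]
        nlinarith [sq_nonneg (u m - u (m + 1)), humono m, hX0 m]
      linarith
  -- the witnesses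
  refine ⟨fun i => (u i.val)⁻¹, ?_, ?_⟩
  · intro i
    constructor
    · positivity
    · exact inv_le_one_of_one_le₀ (hu1 i.val)
  · intro i
    have hsum_eq : ∑ j ∈ Finset.univ.filter (fun j => j < i), x j * (u j.val)⁻¹
        = ∑ j ∈ Finset.range i.val, X j * (u j)⁻¹ := by
      rw [Finset.sum_filter]
      have hterm : ∀ j : Fin n, (if j < i then x j * (u j.val)⁻¹ else 0)
          = (fun k => if k < i.val then X k * (u k)⁻¹ else 0) j.val := by
        intro j
        simp only [hX, Fin.lt_def, j.isLt, dif_pos, Fin.eta]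
      rw [Finset.sum_congr rfl (fun j _ => hterm j),
        Fin.sum_univ_eq_sum_range (fun k => if k < i.val then X k * (u k)⁻¹ else 0),
        ← Finset.sum_filter]
      congr 1
      ext k; simp only [Finset.mem_filter, Finset.mem_range]; omega
    rw [hsum_eq]
    have hca : c * Real.sqrt a = 1 := by rw [hc, hsqa]; nlinarith
    have h2 : c * u i.val ≤ 1 - ∑ j ∈ Finset.range i.val, X j * (u j)⁻¹ := by
      nlinarith [hkey i.val]
    have hu0 : (0:ℝ) < u i.val := by linarith [hu1 i.val]
    have h3 := mul_le_mul_of_nonneg_left h2 (inv_nonneg.2 hu0.le)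
    have h4 : (u i.val)⁻¹ * (c * u i.val) = c := by field_simp
    linarith
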